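/- Under the isometry Ξ : L²(S¹,ℂⁿ) → L²(S¹,ℂ) with Ξ(f₀,…,f_{n−1})(z) = Σ_{i=0}^{n−1} z^i f_i(zⁿ), multiplication by z on L²(S¹,ℂ) corresponds to multiplication by the matrix Λ on L²(S¹,ℂⁿ): that is, Ξ(Λ·f) = z·Ξ(f) for all f ∈ L²(S¹,ℂⁿ), where Λ is the n×n matrix-valued function with Λ_{i+1,i} = 1 (1 ≤ i ≤ n−1), Λ_{1,n}(z) = z, and zeros elsewhere. -/
import Mathlib


/-- The isometry `Ξ` in the Fourier-coefficient model: a vector-valued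
coefficient family `f : ℤ × Fin n → ℂ` (component `α`, frequency `k`) is sent
to the scalar coefficient family `j ↦ f (j / n, j % n)`; i.e.
`Ξ(e_{α,k}) = z^{nk+α}`. -/
def xiMap (n : ℕ) (hn : 0 < n) : ((ℤ × Fin n) → ℂ) →ₗ[ℂ] (ℤ → ℂ) where
  toFun f := fun j =>
    f (j / (n : ℤ), ⟨(j % (n : ℤ)).toNat, by
      have h1 : 0 ≤ j % (n : ℤ) := Int.emod_nonneg j (by exact_mod_cast hn.ne')
      have h2 : j % (n : ℤ) < (n : ℤ) := Int.emod_lt_of_pos j (by exact_mod_cast hn)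
      omega⟩)
  map_add' _ _ := rfl
  map_smul' _ _ := rfl

/-- Multiplication by the matrix-valued loop `Λ` (with `Λ_{i+1,i} = 1`,
`Λ_{1,n}(z) = z`) on `L²(S¹,ℂⁿ)` in the Fourier model: component `α ≥ 1` of
`Λf` is component `α−1` of `f`, and component `0` of `Λf` is `z` times
component `n−1` of `f` (frequency shifted by one). -/
def mulLambda (n : ℕ) (hn : 0 < n) : ((ℤ × Fin n) → ℂ) →ₗ[ℂ] ((ℤ × Fin n) → ℂ) where
  toFun f := fun p =>
    if (p.2 : ℕ) = 0 then f (p.1 - 1, ⟨n - 1, by omega⟩)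
    else f (p.1, ⟨(p.2 : ℕ) - 1, by have := p.2.isLt; omega⟩)
  map_add' f g := by funext p; by_cases h : (p.2 : ℕ) = 0 <;> simp [h]
  map_smul' c f := by funext p; by_cases h : (p.2 : ℕ) = 0 <;> simp [h]

/-- Multiplication by `z` on `L²(S¹,ℂ)` in the Fourier model. -/
def mulZScalar : (ℤ → ℂ) →ₗ[ℂ] (ℤ → ℂ) where
  toFun f := fun j => f (j - 1)
  map_add' _ _ := rfl
  map_smul' _ _ := rfl

/-- under `Ξ`, multiplication by the matrix `Λ` on `L²(S¹,ℂⁿ)`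
corresponds to multiplication by `z` on `L²(S¹,ℂ)`:
`Ξ(Λ·f) = z·Ξ(f)` for all `f`. -/
theorem xi_intertwines_lambda (n : ℕ) (hn : 0 < n) :
    ∀ f : (ℤ × Fin n) → ℂ,
      xiMap n hn (mulLambda n hn f) = mulZScalar (xiMap n hn f) := by
  intro f
  funext j
  have hn' : (0:ℤ) < (n:ℤ) := by exact_mod_cast hn
  have h1 : 0 ≤ j % (n:ℤ) := Int.emod_nonneg j hn'.ne'
  have h2 : j % (n:ℤ) < (n:ℤ) := Int.emod_lt_of_pos j hn'
  have key : (n:ℤ) * (j / n) + j % n = j := Int.mul_ediv_add_emod j n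
  simp only [xiMap, mulLambda, mulZScalar, LinearMap.coe_mk, AddHom.coe_mk]
  by_cases h : (j % (n:ℤ)).toNat = 0
  · have h0 : j % (n:ℤ) = 0 := by omega
    rw [if_pos h]
    have e : (n:ℤ) * (j / n - 1) = (n:ℤ) * (j / n) - n := by ring
    obtain ⟨hq, hr⟩ : (j - 1) / (n:ℤ) = j / n - 1 ∧ (j - 1) % (n:ℤ) = (n:ℤ) - 1 :=
      (Int.ediv_emod_unique hn').mpr ⟨by omega, by omega, by omega⟩
    have ht : ((j - 1) % (n:ℤ)).toNat = n - 1 := by omega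
    rw [hq]
    exact congrArg f (Prod.ext rfl (Fin.ext (by simp [ht])))
  · rw [if_neg h]
    obtain ⟨hq, hr⟩ : (j - 1) / (n:ℤ) = j / n ∧ (j - 1) % (n:ℤ) = j % n - 1 :=
      (Int.ediv_emod_unique hn').mpr ⟨by omega, by omega, by omega⟩
    have ht : ((j - 1) % (n:ℤ)).toNat = (j % (n:ℤ)).toNat - 1 := by omega
    rw [hq]
    exact congrArg f (Prod.ext rfl (Fin.ext (by simp [ht])))
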